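/- If the proposition ‖A‖ has a constructive proof, then the proposition A has a classical proof. -/

import Mathlib

/-- Terms: de Bruijn variables and a binary function symbol (union). -/
inductive Tm : Type where
  | var : Nat → Tm
  | cup : Tm → Tm → Tm
deriving DecidableEq

def Tm.rename (f : Nat → Nat) : Tm → Tm
  | .var n => .var (f n)
  | .cup s t => .cup (s.rename f) (t.rename f)

def Tm.subst (σ : Nat → Tm) : Tm → Tm
  | .var n => σ n
  | .cup s t => .cup (s.subst σ) (t.subst σ)

/-- First-order formulas over Nat-indexed predicate symbols, de Bruijn binders. -/
inductive Fm : Type where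
  | atom : Nat → List Tm → Fm
  | top : Fm
  | bot : Fm
  | neg : Fm → Fm
  | and : Fm → Fm → Fm
  | or : Fm → Fm → Fm
  | imp : Fm → Fm → Fm
  | all : Fm → Fm
  | ex : Fm → Fm
deriving DecidableEq

def liftR (f : Nat → Nat) : Nat → Nat
  | 0 => 0
  | n + 1 => f n + 1

def liftS (σ : Nat → Tm) : Nat → Tm
  | 0 => .var 0
  | n + 1 => (σ n).rename Nat.succ

def Fm.rename (f : Nat → Nat) : Fm → Fm
  | .atom p l => .atom p (l.map (Tm.rename f))
  | .top => .top
  | .bot => .bot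
  | .neg A => .neg (A.rename f)
  | .and A B => .and (A.rename f) (B.rename f)
  | .or A B => .or (A.rename f) (B.rename f)
  | .imp A B => .imp (A.rename f) (B.rename f)
  | .all A => .all (A.rename (liftR f))
  | .ex A => .ex (A.rename (liftR f))

def Fm.subst (σ : Nat → Tm) : Fm → Fm
  | .atom p l => .atom p (l.map (Tm.subst σ))
  | .top => .top
  | .bot => .bot
  | .neg A => .neg (A.subst σ)
  | .and A B => .and (A.subst σ) (B.subst σ)
  | .or A B => .or (A.subst σ) (B.subst σ)
  | .imp A B => .imp (A.subst σ) (B.subst σ)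
  | .all A => .all (A.subst (liftS σ))
  | .ex A => .ex (A.subst (liftS σ))

/-- Shift all free variables up by one. -/
def Fm.shift (A : Fm) : Fm := A.rename Nat.succ

/-- Instantiate the outermost bound variable with term `t` : `(t/x)A`. -/
def Fm.inst (t : Tm) (A : Fm) : Fm :=
  A.subst (fun n => match n with | 0 => t | n + 1 => .var n)

/-- Double negation. -/
def Fm.dn (A : Fm) : Fm := .neg (.neg A)

/-- Cut-free classical multi-conclusion sequent calculus (Figure 1). -/
inductive Cl : List Fm → List Fm → Prop where
  | ax (A : Fm) : Cl [A] [A]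
  | perm {Γ Γ' Δ Δ'} : Γ.Perm Γ' → Δ.Perm Δ' → Cl Γ Δ → Cl Γ' Δ'
  | contrL {Γ Δ A} : Cl (A :: A :: Γ) Δ → Cl (A :: Γ) Δ
  | contrR {Γ Δ A} : Cl Γ (A :: A :: Δ) → Cl Γ (A :: Δ)
  | weakL {Γ Δ A} : Cl Γ Δ → Cl (A :: Γ) Δ
  | weakR {Γ Δ A} : Cl Γ Δ → Cl Γ (A :: Δ)
  | topR {Γ Δ} : Cl Γ (.top :: Δ)
  | botL {Γ Δ} : Cl (.bot :: Γ) Δ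
  | negL {Γ Δ A} : Cl Γ (A :: Δ) → Cl (.neg A :: Γ) Δ
  | negR {Γ Δ A} : Cl (A :: Γ) Δ → Cl Γ (.neg A :: Δ)
  | andL {Γ Δ A B} : Cl (A :: B :: Γ) Δ → Cl (.and A B :: Γ) Δ
  | andR {Γ Δ A B} : Cl Γ (A :: Δ) → Cl Γ (B :: Δ) → Cl Γ (.and A B :: Δ)
  | orL {Γ Δ A B} : Cl (A :: Γ) Δ → Cl (B :: Γ) Δ → Cl (.or A B :: Γ) Δ
  | orR1 {Γ Δ A B} : Cl Γ (A :: Δ) → Cl Γ (.or A B :: Δ)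
  | orR2 {Γ Δ A B} : Cl Γ (B :: Δ) → Cl Γ (.or A B :: Δ)
  | impL {Γ Δ A B} : Cl Γ (A :: Δ) → Cl (B :: Γ) Δ → Cl (.imp A B :: Γ) Δ
  | impR {Γ Δ A B} : Cl (A :: Γ) (B :: Δ) → Cl Γ (.imp A B :: Δ)
  | allL {Γ Δ A} (t : Tm) : Cl (A.inst t :: Γ) Δ → Cl (.all A :: Γ) Δ
  | allR {Γ Δ A} : Cl (Γ.map Fm.shift) (A :: Δ.map Fm.shift) → Cl Γ (.all A :: Δ)
  | exL {Γ Δ A} : Cl (A :: Γ.map Fm.shift) (Δ.map Fm.shift) → Cl (.ex A :: Γ) Δ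
  | exR {Γ Δ A} (t : Tm) : Cl Γ (A.inst t :: Δ) → Cl Γ (.ex A :: Δ)

/-- Constructive (intuitionistic) single-conclusion sequent calculus:
the restriction of the classical calculus to sequents with at most one
conclusion, with the adapted ⇒-left rule. -/
inductive Intu : List Fm → Option Fm → Prop where
  | ax (A : Fm) : Intu [A] (some A)
  | perm {Γ Γ' Δ} : Γ.Perm Γ' → Intu Γ Δ → Intu Γ' Δ
  | contrL {Γ Δ A} : Intu (A :: A :: Γ) Δ → Intu (A :: Γ) Δ
  | weakL {Γ Δ A} : Intu Γ Δ → Intu (A :: Γ) Δ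
  | weakR {Γ A} : Intu Γ none → Intu Γ (some A)
  | topR {Γ} : Intu Γ (some .top)
  | botL {Γ Δ} : Intu (.bot :: Γ) Δ
  | negL {Γ A} : Intu Γ (some A) → Intu (.neg A :: Γ) none
  | negR {Γ A} : Intu (A :: Γ) none → Intu Γ (some (.neg A))
  | andL {Γ Δ A B} : Intu (A :: B :: Γ) Δ → Intu (.and A B :: Γ) Δ
  | andR {Γ A B} : Intu Γ (some A) → Intu Γ (some B) → Intu Γ (some (.and A B))
  | orL {Γ Δ A B} : Intu (A :: Γ) Δ → Intu (B :: Γ) Δ → Intu (.or A B :: Γ) Δ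
  | orR1 {Γ A B} : Intu Γ (some A) → Intu Γ (some (.or A B))
  | orR2 {Γ A B} : Intu Γ (some B) → Intu Γ (some (.or A B))
  | impL {Γ Δ A B} : Intu Γ (some A) → Intu (B :: Γ) Δ → Intu (.imp A B :: Γ) Δ
  | impR {Γ A B} : Intu (A :: Γ) (some B) → Intu Γ (some (.imp A B))
  | allL {Γ Δ A} (t : Tm) : Intu (A.inst t :: Γ) Δ → Intu (.all A :: Γ) Δ
  | allR {Γ A} : Intu (Γ.map Fm.shift) (some A) → Intu Γ (some (.all A))
  | exL {Γ Δ A} : Intu (A :: Γ.map Fm.shift) (Δ.map Fm.shift) → Intu (.ex A :: Γ) Δ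
  | exR {Γ A} (t : Tm) : Intu Γ (some (A.inst t)) → Intu Γ (some (.ex A))

/-- Dowek's translation ‖·‖: double negations both before and after each
connective and quantifier, atoms unchanged. -/
def Fm.bar : Fm → Fm
  | .atom p l => .atom p l
  | .top => Fm.dn .top
  | .bot => Fm.dn .bot
  | .neg A => Fm.dn (Fm.dn (.neg A.bar))
  | .and A B => Fm.dn (.and (Fm.dn A.bar) (Fm.dn B.bar))
  | .or A B => Fm.dn (.or (Fm.dn A.bar) (Fm.dn B.bar))
  | .imp A B => Fm.dn (.imp (Fm.dn A.bar) (Fm.dn B.bar))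
  | .all A => Fm.dn (.all (Fm.dn A.bar))
  | .ex A => Fm.dn (.ex (Fm.dn A.bar))

/-- The light translation |·|: like ‖·‖ but the outermost double negation
is removed. -/
def Fm.light : Fm → Fm
  | .atom p l => .atom p l
  | .top => .top
  | .bot => .bot
  | .neg A => .neg (Fm.dn A.bar)
  | .and A B => .and (Fm.dn A.bar) (Fm.dn B.bar)
  | .or A B => .or (Fm.dn A.bar) (Fm.dn B.bar)
  | .imp A B => .imp (Fm.dn A.bar) (Fm.dn B.bar)
  | .all A => .all (Fm.dn A.bar)
  | .ex A => .ex (Fm.dn A.bar)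

/-- A formula is atomic if it is of the form `atom p l`. -/
def Fm.isAtom : Fm → Prop
  | .atom _ _ => True
  | _ => False



section Syn

theorem liftR_inj {f : Nat → Nat} (hf : Function.Injective f) :
    Function.Injective (liftR f) := by
  intro a b h
  cases a <;> cases b <;> simp [liftR] at h <;> first | rfl | (exact absurd (hf h) (by omega)) | (exact congrArg Nat.succ (hf h)) | omega

theorem Tm.rename_inj {f : Nat → Nat} (hf : Function.Injective f) :
    Function.Injective (Tm.rename f) := by
  intro s t h
  induction s generalizing t <;> cases t <;> simp_all [Tm.rename]
  · exact hf h
  · aesop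

theorem Fm.rename_inj {f : Nat → Nat} (hf : Function.Injective f) :
    Function.Injective (Fm.rename f) := by
  intro s t h
  induction s generalizing t f <;> cases t <;> simp_all [Fm.rename]
  case atom.atom => exact List.map_injective_iff.mpr (Tm.rename_inj hf) h.2
  case neg.neg a ih b => exact ih hf h
  case and.and a b ih1 ih2 c d => exact ⟨ih1 hf h.1, ih2 hf h.2⟩
  case or.or a b ih1 ih2 c d => exact ⟨ih1 hf h.1, ih2 hf h.2⟩
  case imp.imp a b ih1 ih2 c d => exact ⟨ih1 hf h.1, ih2 hf h.2⟩
  case all.all a ih b => exact ih (liftR_inj hf) h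
  case ex.ex a ih b => exact ih (liftR_inj hf) h

theorem Tm.subst_rename (f : Nat → Nat) (σ : Nat → Tm) (t : Tm) :
    (t.rename f).subst σ = t.subst (σ ∘ f) := by
  induction t <;> simp_all [Tm.rename, Tm.subst]

theorem liftS_comp_liftR (σ : Nat → Tm) (f : Nat → Nat) :
    liftS σ ∘ liftR f = liftS (σ ∘ f) := by
  funext n; cases n <;> simp [liftS, liftR]

theorem Fm.subst_rename (f : Nat → Nat) (σ : Nat → Tm) (A : Fm) :
    (A.rename f).subst σ = A.subst (σ ∘ f) := by
  induction A generalizing f σ <;>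
    simp_all [Fm.rename, Fm.subst, Tm.subst_rename, liftS_comp_liftR, Function.comp]

theorem liftS_var : liftS Tm.var = Tm.var := by
  funext n; cases n <;> simp [liftS, Tm.rename]

theorem Tm.subst_var (t : Tm) : t.subst Tm.var = t := by
  induction t <;> simp_all [Tm.subst]

theorem Fm.subst_var (A : Fm) : A.subst Tm.var = A := by
  induction A <;> simp_all [Fm.subst, liftS_var, Tm.subst_var]
  · rename_i l; induction l <;> simp_all [Tm.subst_var]

theorem Fm.inst_rename (A : Fm) :
    (A.rename (liftR Nat.succ)).inst (.var 0) = A := by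
  have : ((fun n => match n with | 0 => Tm.var 0 | n + 1 => Tm.var n) ∘ liftR Nat.succ)
      = Tm.var := by
    funext n; cases n <;> simp [liftR]
  rw [Fm.inst, Fm.subst_rename, this, Fm.subst_var]

end Syn
section Er

/-- smart negation -/
def Fm.negE : Fm → Fm
  | .neg A => A
  | A => .neg A

/-- erase double negations -/
def Fm.er : Fm → Fm
  | .atom p l => .atom p l
  | .top => .top
  | .bot => .bot
  | .neg A => A.er.negE
  | .and A B => .and A.er B.er
  | .or A B => .or A.er B.er
  | .imp A B => .imp A.er B.er
  | .all A => .all A.er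
  | .ex A => .ex A.er

/-- not a double negation at top -/
def Fm.red : Fm → Prop
  | .neg (.neg _) => False
  | _ => True

def Fm.isNeg : Fm → Prop
  | .neg _ => True
  | _ => False

theorem Fm.negE_of_not_neg {A : Fm} (h : ¬ A.isNeg) : A.negE = .neg A := by
  cases A <;> simp_all [Fm.isNeg, Fm.negE]

theorem Fm.red_of_not_neg {A : Fm} (h : ¬ A.isNeg) : A.red := by
  cases A <;> simp_all [Fm.isNeg, Fm.red]

theorem Fm.red_neg {A : Fm} (h : (Fm.neg A).red) : ¬ A.isNeg := by
  cases A <;> simp_all [Fm.isNeg, Fm.red]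

theorem Fm.red_er (A : Fm) : A.er.red := by
  induction A <;> simp_all [Fm.er, Fm.red]
  case neg A ih =>
    cases h : A.er <;> simp_all [Fm.negE, Fm.red]
    case neg B => cases B <;> simp_all [Fm.red]

theorem Fm.er_not_neg {A : Fm} (h : ¬ A.isNeg) : ¬ A.er.isNeg := by
  cases A <;> simp_all [Fm.isNeg, Fm.er]

theorem Fm.negE_negE {A : Fm} (h : A.red) : A.negE.negE = A := by
  cases A
  case neg B => exact Fm.negE_of_not_neg (Fm.red_neg h)
  all_goals rfl

theorem Fm.negE_negE_er (A : Fm) : A.er.negE.negE = A.er :=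
  Fm.negE_negE (Fm.red_er A)

theorem Fm.er_dn (A : Fm) : (Fm.dn A).er = A.er := by
  show ((A.er.negE).negE) = A.er
  exact Fm.negE_negE (Fm.red_er A)

theorem Fm.negE_rename (f : Nat → Nat) (A : Fm) :
    (A.rename f).negE = A.negE.rename f := by
  cases A <;> simp [Fm.negE, Fm.rename]

theorem Fm.er_rename (f : Nat → Nat) (A : Fm) :
    (A.rename f).er = A.er.rename f := by
  induction A generalizing f
  case neg A ih =>
    show ((A.rename f).er).negE = (A.er.negE).rename f
    rw [ih, Fm.negE_rename]
  all_goals simp_all [Fm.er, Fm.rename]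

theorem Fm.negE_subst (σ : Nat → Tm) (A : Fm) :
    (A.subst σ).negE = A.negE.subst σ := by
  cases A <;> simp [Fm.negE, Fm.subst]

theorem Fm.er_subst (σ : Nat → Tm) (A : Fm) :
    (A.subst σ).er = A.er.subst σ := by
  induction A generalizing σ
  case neg A ih =>
    show ((A.subst σ).er).negE = (A.er.negE).subst σ
    rw [ih, Fm.negE_subst]
  all_goals simp_all [Fm.er, Fm.subst]

theorem Fm.er_shift (A : Fm) : A.shift.er = A.er.shift := Fm.er_rename _ _

theorem Fm.er_inst (t : Tm) (A : Fm) : (A.inst t).er = A.er.inst t := Fm.er_subst _ _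

theorem Fm.er_bar (A : Fm) : A.bar.er = A.er := by
  induction A <;> simp_all [Fm.bar, Fm.dn, Fm.er, Fm.negE_negE_er]
  all_goals exact Fm.negE_negE (by simp [Fm.red])

/-- strip top-level double negations -/
def Fm.strip : Fm → Fm
  | .neg (.neg A) => A.strip
  | A => A

theorem Fm.er_strip (A : Fm) : A.strip.er = A.er := by
  induction A using Fm.strip.induct <;> simp_all [Fm.strip, Fm.er, Fm.negE_negE_er]

theorem Fm.red_strip (A : Fm) : A.strip.red := by
  induction A using Fm.strip.induct <;> simp_all [Fm.strip, Fm.red]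
  all_goals (rename_i h; cases ‹Fm› <;> simp_all [Fm.red])

end Er
section ClHelpers

theorem Cl.permL {Γ Γ' Δ : List Fm} (h : Cl Γ Δ) (p : Γ.Perm Γ') : Cl Γ' Δ :=
  Cl.perm p (List.Perm.refl _) h

theorem Cl.permR {Γ Δ Δ' : List Fm} (h : Cl Γ Δ) (p : Δ.Perm Δ') : Cl Γ Δ' :=
  Cl.perm (List.Perm.refl _) p h

theorem Cl.weakL_many {Γ Δ : List Fm} (Ξ : List Fm) (h : Cl Γ Δ) : Cl (Ξ ++ Γ) Δ := by
  induction Ξ with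
  | nil => exact h
  | cons a Ξ ih => exact Cl.weakL ih

theorem Cl.weakR_many {Γ Δ : List Fm} (Θ : List Fm) (h : Cl Γ Δ) : Cl Γ (Θ ++ Δ) := by
  induction Θ with
  | nil => exact h
  | cons a Θ ih => exact Cl.weakR ih

theorem Cl.memax {Γ Δ : List Fm} {A : Fm} (h1 : A ∈ Γ) (h2 : A ∈ Δ) : Cl Γ Δ := by
  have := Cl.weakR_many (Δ.erase A) (Cl.weakL_many (Γ.erase A) (Cl.ax A))
  refine Cl.perm ?_ ?_ this
  · exact ((List.perm_append_comm).trans (List.perm_cons_erase h1).symm)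
  · exact ((List.perm_append_comm).trans (List.perm_cons_erase h2).symm)

theorem Cl.subR {Γ Δ₀ Δ : List Fm} (s : Δ₀.Sublist Δ) (h : Cl Γ Δ₀) : Cl Γ Δ := by
  obtain ⟨Δ₁, hp⟩ := s.exists_perm_append
  exact (Cl.weakR_many Δ₁ h).permR (List.perm_append_comm.trans hp.symm)

theorem Cl.subL {Γ₀ Γ Δ : List Fm} (s : Γ₀.Sublist Γ) (h : Cl Γ₀ Δ) : Cl Γ Δ := by
  obtain ⟨Γ₁, hp⟩ := s.exists_perm_append
  exact (Cl.weakL_many Γ₁ h).permL (List.perm_append_comm.trans hp.symm)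

theorem Cl.filterR {Γ Δ : List Fm} {p : Fm → Bool} (h : Cl Γ (Δ.filter p)) : Cl Γ Δ :=
  Cl.subR (List.filter_sublist (l := Δ)) h

theorem Cl.filterL {Γ Δ : List Fm} {p : Fm → Bool} (h : Cl (Γ.filter p) Δ) : Cl Γ Δ :=
  Cl.subL (List.filter_sublist (l := Γ)) h

theorem Fm.red_of_ne {X : Fm} (h : ∀ a : Fm, X = a.neg.neg → False) : X.red := by
  cases X <;> try trivial
  rename_i B; cases B <;> try trivial
  exact absurd rfl (fun hh => h _ hh)

theorem Fm.strip_eq_of_red {X : Fm} (h : X.red) : X.strip = X := by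
  cases X <;> try rfl
  rename_i B; cases B <;> first | rfl | exact absurd h (by simp [Fm.red])

/-- introduce double negations on the left -/
theorem Cl.stripL {Γ Δ : List Fm} (X : Fm) (h : Cl (X.strip :: Γ) Δ) : Cl (X :: Γ) Δ := by
  induction X using Fm.strip.induct with
  | case1 X ih =>
    have h1 : Cl (X.strip :: Γ) Δ := h
    have h2 := ih h1
    exact Cl.negL (Cl.negR h2)
  | case2 X hX => rwa [Fm.strip_eq_of_red (Fm.red_of_ne hX)] at h

/-- introduce double negations on the right -/
theorem Cl.stripR {Γ Δ : List Fm} (X : Fm) (h : Cl Γ (X.strip :: Δ)) : Cl Γ (X :: Δ) := by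
  induction X using Fm.strip.induct with
  | case1 X ih => exact Cl.negR (Cl.negL (ih h))
  | case2 X hX => rwa [Fm.strip_eq_of_red (Fm.red_of_ne hX)] at h

end ClHelpers
section Shape

theorem Fm.er_red_neg {Y : Fm} (hY : Y.red) {G : Fm} (h : Y.er = .neg G) :
    ∃ Y₁, Y = .neg Y₁ ∧ Y₁.er = G := by
  cases Y <;> simp_all [Fm.er]
  case neg B =>
    rw [Fm.negE_of_not_neg (Fm.er_not_neg (Fm.red_neg hY))] at h
    exact (Fm.neg.injEq _ _ ▸ h)

theorem Fm.er_red_atom {Y : Fm} (hY : Y.red) {p l} (h : Y.er = .atom p l) :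
    Y = .atom p l := by
  cases Y <;> simp_all [Fm.er]
  case neg B => rw [Fm.negE_of_not_neg (Fm.er_not_neg (Fm.red_neg hY))] at h; simp at h

theorem Fm.er_red_top {Y : Fm} (hY : Y.red) (h : Y.er = .top) : Y = .top := by
  cases Y <;> simp_all [Fm.er]
  case neg B => rw [Fm.negE_of_not_neg (Fm.er_not_neg (Fm.red_neg hY))] at h; simp at h

theorem Fm.er_red_bot {Y : Fm} (hY : Y.red) (h : Y.er = .bot) : Y = .bot := by
  cases Y <;> simp_all [Fm.er]
  case neg B => rw [Fm.negE_of_not_neg (Fm.er_not_neg (Fm.red_neg hY))] at h; simp at h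

theorem Fm.er_red_and {Y : Fm} (hY : Y.red) {G H : Fm} (h : Y.er = .and G H) :
    ∃ Y₁ Y₂, Y = .and Y₁ Y₂ ∧ Y₁.er = G ∧ Y₂.er = H := by
  cases Y <;> simp_all [Fm.er]
  case neg B => rw [Fm.negE_of_not_neg (Fm.er_not_neg (Fm.red_neg hY))] at h; simp at h

theorem Fm.er_red_or {Y : Fm} (hY : Y.red) {G H : Fm} (h : Y.er = .or G H) :
    ∃ Y₁ Y₂, Y = .or Y₁ Y₂ ∧ Y₁.er = G ∧ Y₂.er = H := by
  cases Y <;> simp_all [Fm.er]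
  case neg B => rw [Fm.negE_of_not_neg (Fm.er_not_neg (Fm.red_neg hY))] at h; simp at h

theorem Fm.er_red_imp {Y : Fm} (hY : Y.red) {G H : Fm} (h : Y.er = .imp G H) :
    ∃ Y₁ Y₂, Y = .imp Y₁ Y₂ ∧ Y₁.er = G ∧ Y₂.er = H := by
  cases Y <;> simp_all [Fm.er]
  case neg B => rw [Fm.negE_of_not_neg (Fm.er_not_neg (Fm.red_neg hY))] at h; simp at h

theorem Fm.er_red_all {Y : Fm} (hY : Y.red) {G : Fm} (h : Y.er = .all G) :
    ∃ Y₁, Y = .all Y₁ ∧ Y₁.er = G := by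
  cases Y <;> simp_all [Fm.er]
  case neg B => rw [Fm.negE_of_not_neg (Fm.er_not_neg (Fm.red_neg hY))] at h; simp at h

theorem Fm.er_red_ex {Y : Fm} (hY : Y.red) {G : Fm} (h : Y.er = .ex G) :
    ∃ Y₁, Y = .ex Y₁ ∧ Y₁.er = G := by
  cases Y <;> simp_all [Fm.er]
  case neg B => rw [Fm.negE_of_not_neg (Fm.er_not_neg (Fm.red_neg hY))] at h; simp at h

theorem Cl.exchL {A B : Fm} {Γ Δ : List Fm} (h : Cl (A::B::Γ) Δ) : Cl (B::A::Γ) Δ :=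
  h.permL (List.Perm.swap B A Γ)

theorem Cl.exchR {A B : Fm} {Γ Δ : List Fm} (h : Cl Γ (A::B::Δ)) : Cl Γ (B::A::Δ) :=
  h.permR (List.Perm.swap B A Δ)

theorem Fm.er_dn' (A : Fm) : (Fm.neg (Fm.neg A)).er = A.er := Fm.er_dn A

end Shape

section DnAx

theorem Cl.dn_ax (X Y : Fm) (h : X.er = Y.er) : Cl [X] [Y] := by
  by_cases hX : ∃ X₁, X = Fm.neg (Fm.neg X₁)
  · obtain ⟨X₁, rfl⟩ := hX
    exact Cl.negL (Cl.negR (Cl.dn_ax X₁ Y ((Fm.er_dn' X₁) ▸ h)))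
  · by_cases hY : ∃ Y₁, Y = Fm.neg (Fm.neg Y₁)
    · obtain ⟨Y₁, rfl⟩ := hY
      exact Cl.negR (Cl.negL (Cl.dn_ax X Y₁ ((Fm.er_dn' Y₁) ▸ h)))
    · have hXr : X.red := Fm.red_of_ne (fun a ha => hX ⟨a, ha⟩)
      have hYr : Y.red := Fm.red_of_ne (fun a ha => hY ⟨a, ha⟩)
      cases X with
      | atom p l =>
        rw [Fm.er_red_atom hYr ((show (Fm.atom p l).er = _ from rfl) ▸ h.symm)]
        exact Cl.ax _
      | top =>
        rw [Fm.er_red_top hYr (show Y.er = .top from h.symm)]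
        exact Cl.topR
      | bot => exact Cl.botL
      | neg X₁ =>
        have hX₁ : ¬ X₁.isNeg := Fm.red_neg hXr
        have h' : Y.er = Fm.neg X₁.er := by
          rw [← h]; show _ = _; rw [show (Fm.neg X₁).er = X₁.er.negE from rfl,
            Fm.negE_of_not_neg (Fm.er_not_neg hX₁)]
        obtain ⟨Y₁, rfl, hY₁⟩ := Fm.er_red_neg hYr h'
        exact Cl.negR (Cl.exchL (Cl.negL (Cl.dn_ax Y₁ X₁ hY₁)))
      | and X₁ X₂ =>
        obtain ⟨Y₁, Y₂, rfl, h₁, h₂⟩ := Fm.er_red_and hYr h.symm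
        refine Cl.andR ?_ ?_
        · exact Cl.andL (Cl.exchL (Cl.weakL (Cl.dn_ax X₁ Y₁ h₁.symm)))
        · exact Cl.andL (Cl.weakL (Cl.dn_ax X₂ Y₂ h₂.symm))
      | or X₁ X₂ =>
        obtain ⟨Y₁, Y₂, rfl, h₁, h₂⟩ := Fm.er_red_or hYr h.symm
        exact Cl.orL (Cl.orR1 (Cl.dn_ax X₁ Y₁ h₁.symm)) (Cl.orR2 (Cl.dn_ax X₂ Y₂ h₂.symm))
      | imp X₁ X₂ =>
        obtain ⟨Y₁, Y₂, rfl, h₁, h₂⟩ := Fm.er_red_imp hYr h.symm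
        refine Cl.impR (Cl.exchL (Cl.impL ?_ ?_))
        · exact Cl.exchR (Cl.weakR (Cl.dn_ax Y₁ X₁ h₁))
        · exact Cl.exchL (Cl.weakL (Cl.dn_ax X₂ Y₂ h₂.symm))
      | all X₁ =>
        obtain ⟨Y₁, rfl, h₁⟩ := Fm.er_red_all hYr h.symm
        refine Cl.allR ?_
        show Cl [Fm.all (X₁.rename (liftR Nat.succ))] [Y₁]
        refine Cl.allL (Tm.var 0) ?_
        rw [Fm.inst_rename]
        exact Cl.dn_ax X₁ Y₁ h₁.symm
      | ex X₁ =>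
        obtain ⟨Y₁, rfl, h₁⟩ := Fm.er_red_ex hYr h.symm
        refine Cl.exL ?_
        show Cl [X₁] [Fm.ex (Y₁.rename (liftR Nat.succ))]
        refine Cl.exR (Tm.var 0) ?_
        rw [Fm.inst_rename]
        exact Cl.dn_ax X₁ Y₁ h₁.symm
termination_by sizeOf X + sizeOf Y
decreasing_by all_goals (simp_wf; subst_vars <;> simp +arith +decide)

end DnAx
section Rem

def remN (A : Fm) (Δ : List Fm) : List Fm := Δ.filter (fun X => decide (X ≠ Fm.neg A))

theorem remN_nil (A : Fm) : remN A [] = [] := rfl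

theorem remN_cons_self (A : Fm) (Δ : List Fm) : remN A (Fm.neg A :: Δ) = remN A Δ := by
  simp [remN]

theorem remN_cons_ne {A X : Fm} (h : X ≠ Fm.neg A) (Δ : List Fm) :
    remN A (X :: Δ) = X :: remN A Δ := by
  simp [remN, h]

theorem remN_perm {A : Fm} {Δ Δ' : List Fm} (h : Δ.Perm Δ') :
    (remN A Δ).Perm (remN A Δ') := h.filter _

theorem shift_ne_of_ne {A X : Fm} (h : X ≠ Fm.neg A) : X.shift ≠ Fm.neg A.shift := by
  intro hc
  apply h
  have : X.shift = (Fm.neg A).shift := hc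
  exact Fm.rename_inj (fun a b h => Nat.succ_injective h) this

theorem remN_shift (A : Fm) (Δ : List Fm) :
    remN A.shift (Δ.map Fm.shift) = (remN A Δ).map Fm.shift := by
  induction Δ with
  | nil => rfl
  | cons X Δ ih =>
    by_cases h : X = Fm.neg A
    · subst h
      simp only [List.map_cons]
      rw [remN_cons_self,
        show (Fm.neg A).shift = Fm.neg A.shift from rfl, remN_cons_self, ih]
    · simp only [List.map_cons]
      rw [remN_cons_ne (shift_ne_of_ne h), remN_cons_ne h, List.map_cons, ih]

/-- restore a possibly-deleted head formula on the right -/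
theorem Cl.remN_restoreR {Γ Δ : List Fm} {A B : Fm} (h : Cl Γ (remN A (B :: Δ))) :
    Cl Γ (B :: remN A Δ) := by
  by_cases hB : B = Fm.neg A
  · subst hB; rw [remN_cons_self] at h; exact Cl.weakR h
  · rwa [remN_cons_ne hB] at h

/-- restore a possibly-deleted head formula on the left -/
theorem Cl.remN_restoreL {Γ Δ : List Fm} {A B : Fm} (h : Cl (remN A (B :: Γ)) Δ) :
    Cl (B :: remN A Γ) Δ := by
  by_cases hB : B = Fm.neg A
  · subst hB; rw [remN_cons_self] at h; exact Cl.weakL h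
  · rwa [remN_cons_ne hB] at h

theorem perm_move2 {α : Type*} (a b c : α) (l : List α) :
    (a :: b :: c :: l).Perm (b :: c :: a :: l) :=
  (List.Perm.swap b a _).trans ((List.Perm.swap c a l).cons b)

end Rem
section Inv

theorem Cl.remN_restoreL2 {Γ Δ : List Fm} {A B C : Fm}
    (h : Cl (B :: remN A (C :: Γ)) Δ) : Cl (B :: C :: remN A Γ) Δ := by
  by_cases hC : C = Fm.neg A
  · subst hC; rw [remN_cons_self] at h; exact Cl.exchL (Cl.weakL h)
  · rwa [remN_cons_ne hC] at h

/-- inversion of the right negation rule (all copies at once) -/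
theorem Cl.negR_inv {Γ Δ : List Fm} (h : Cl Γ Δ) : ∀ A, Cl (A :: Γ) (remN A Δ) := by
  induction h with
  | ax B =>
    intro A
    by_cases hB : B = Fm.neg A
    · subst hB
      rw [remN_cons_self, remN_nil]
      exact Cl.exchL (Cl.negL (Cl.ax A))
    · rw [remN_cons_ne hB, remN_nil]
      exact Cl.memax (A := B) (by simp) (by simp)
  | perm p q d ih =>
    intro A
    exact Cl.perm (p.cons A) (remN_perm q) (ih A)
  | contrL d ih =>
    intro A
    refine ((((ih A).permL (perm_move2 _ _ _ _)).contrL).permL ?_)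
    exact (List.Perm.swap _ _ _)
  | @contrR _Γ _Δ B d ih =>
    intro A
    by_cases hB : B = Fm.neg A
    · subst hB; rw [remN_cons_self]
      have := ih A; rw [remN_cons_self, remN_cons_self] at this; exact this
    · rw [remN_cons_ne hB]
      have := ih A; rw [remN_cons_ne hB, remN_cons_ne hB] at this
      exact Cl.contrR this
  | weakL d ih => intro A; exact Cl.exchL (Cl.weakL (ih A))
  | @weakR _Γ _Δ B d ih =>
    intro A
    by_cases hB : B = Fm.neg A
    · subst hB; rw [remN_cons_self]; exact ih A
    · rw [remN_cons_ne hB]; exact Cl.weakR (ih A)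
  | topR =>
    intro A
    rw [remN_cons_ne (by simp)]
    exact Cl.topR
  | botL => intro A; exact Cl.exchL Cl.botL
  | negL d ih =>
    intro A
    exact Cl.exchL (Cl.negL (Cl.remN_restoreR (ih A)))
  | @negR _Γ _Δ B d ih =>
    intro A
    by_cases hB : B = A
    · subst hB; rw [remN_cons_self]
      exact Cl.contrL (ih B)
    · rw [remN_cons_ne (by simpa using hB)]
      exact Cl.negR (Cl.exchL (ih A))
  | andL d ih =>
    intro A
    exact Cl.exchL (Cl.andL (Cl.permL (ih A) (perm_move2 _ _ _ _)))
  | andR d1 d2 ih1 ih2 =>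
    intro A
    rw [remN_cons_ne (by simp)]
    exact Cl.andR (Cl.remN_restoreR (ih1 A)) (Cl.remN_restoreR (ih2 A))
  | orL d1 d2 ih1 ih2 =>
    intro A
    exact Cl.exchL (Cl.orL (Cl.exchL (ih1 A)) (Cl.exchL (ih2 A)))
  | orR1 d ih =>
    intro A
    rw [remN_cons_ne (by simp)]
    exact Cl.orR1 (Cl.remN_restoreR (ih A))
  | orR2 d ih =>
    intro A
    rw [remN_cons_ne (by simp)]
    exact Cl.orR2 (Cl.remN_restoreR (ih A))
  | impL d1 d2 ih1 ih2 =>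
    intro A
    exact Cl.exchL (Cl.impL (Cl.remN_restoreR (ih1 A)) (Cl.exchL (ih2 A)))
  | impR d ih =>
    intro A
    rw [remN_cons_ne (by simp)]
    exact Cl.impR (Cl.exchL (Cl.remN_restoreR (ih A)))
  | allL t d ih =>
    intro A
    exact Cl.exchL (Cl.allL t (Cl.exchL (ih A)))
  | @allR _Γ _Δ B d ih =>
    intro A
    rw [remN_cons_ne (by simp)]
    refine Cl.allR ?_
    have := Cl.remN_restoreR (ih A.shift)
    rwa [remN_shift] at this
  | @exL _Γ _Δ B d ih =>
    intro A
    refine Cl.exchL (Cl.exL ?_)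
    have := Cl.exchL (ih A.shift)
    rwa [remN_shift] at this
  | exR t d ih =>
    intro A
    rw [remN_cons_ne (by simp)]
    exact Cl.exR t (Cl.remN_restoreR (ih A))

/-- inversion of the left negation rule (all copies at once) -/
theorem Cl.negL_inv {Γ Δ : List Fm} (h : Cl Γ Δ) : ∀ A, Cl (remN A Γ) (A :: Δ) := by
  induction h with
  | ax B =>
    intro A
    by_cases hB : B = Fm.neg A
    · subst hB
      rw [remN_cons_self, remN_nil]
      exact Cl.exchR (Cl.negR (Cl.ax A))
    · rw [remN_cons_ne hB, remN_nil]
      exact Cl.memax (A := B) (by simp) (by simp)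
  | perm p q d ih =>
    intro A
    exact Cl.perm (remN_perm p) (q.cons A) (ih A)
  | @contrL _Γ _Δ B d ih =>
    intro A
    by_cases hB : B = Fm.neg A
    · subst hB; rw [remN_cons_self]
      have := ih A; rw [remN_cons_self, remN_cons_self] at this; exact this
    · rw [remN_cons_ne hB]
      have := ih A; rw [remN_cons_ne hB, remN_cons_ne hB] at this
      exact Cl.contrL this
  | contrR d ih =>
    intro A
    exact ((((ih A).permR (perm_move2 _ _ _ _)).contrR).permR (List.Perm.swap _ _ _))
  | @weakL _Γ _Δ B d ih =>
    intro A
    by_cases hB : B = Fm.neg A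
    · subst hB; rw [remN_cons_self]; exact ih A
    · rw [remN_cons_ne hB]; exact Cl.weakL (ih A)
  | weakR d ih => intro A; exact Cl.exchR (Cl.weakR (ih A))
  | topR => intro A; exact Cl.exchR Cl.topR
  | botL => intro A; exact Cl.remN_restoreL Cl.botL
  | @negL _Γ _Δ B d ih =>
    intro A
    by_cases hB : B = A
    · subst hB; rw [remN_cons_self]
      exact Cl.contrR (ih B)
    · rw [remN_cons_ne (by simpa using hB)]
      exact Cl.negL (Cl.exchR (ih A))
  | negR d ih =>
    intro A
    exact Cl.exchR (Cl.negR (Cl.remN_restoreL (ih A)))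
  | andL d ih =>
    intro A
    rw [remN_cons_ne (by simp)]
    exact Cl.andL (Cl.remN_restoreL2 (Cl.remN_restoreL (ih A)))
  | andR d1 d2 ih1 ih2 =>
    intro A
    exact Cl.exchR (Cl.andR (Cl.exchR (ih1 A)) (Cl.exchR (ih2 A)))
  | orL d1 d2 ih1 ih2 =>
    intro A
    rw [remN_cons_ne (by simp)]
    exact Cl.orL (Cl.remN_restoreL (ih1 A)) (Cl.remN_restoreL (ih2 A))
  | orR1 d ih => intro A; exact Cl.exchR (Cl.orR1 (Cl.exchR (ih A)))
  | orR2 d ih => intro A; exact Cl.exchR (Cl.orR2 (Cl.exchR (ih A)))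
  | impL d1 d2 ih1 ih2 =>
    intro A
    rw [remN_cons_ne (by simp)]
    exact Cl.impL (Cl.exchR (ih1 A)) (Cl.remN_restoreL (ih2 A))
  | impR d ih =>
    intro A
    exact Cl.exchR (Cl.impR (Cl.exchR (Cl.remN_restoreL (ih A))))
  | allL t d ih =>
    intro A
    rw [remN_cons_ne (by simp)]
    exact Cl.allL t (Cl.remN_restoreL (ih A))
  | @allR _Γ _Δ B d ih =>
    intro A
    refine Cl.exchR (Cl.allR ?_)
    have := Cl.exchR (ih A.shift)
    rwa [remN_shift] at this
  | @exL _Γ _Δ B d ih =>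
    intro A
    rw [remN_cons_ne (by simp)]
    refine Cl.exL ?_
    have := Cl.remN_restoreL (ih A.shift)
    rwa [remN_shift] at this
  | exR t d ih =>
    intro A
    exact Cl.exchR (Cl.exR t (Cl.exchR (ih A)))

end Inv
section Transport

theorem perm_forall₂ {R : Fm → Fm → Prop} :
    ∀ {l₁ l₂ l₃ : List Fm}, l₁.Perm l₂ → List.Forall₂ R l₂ l₃ →
      ∃ l₄, List.Forall₂ R l₁ l₄ ∧ l₄.Perm l₃ := by
  intro l₁ l₂ l₃ p
  induction p generalizing l₃ with
  | nil => intro h; cases h; exact ⟨[], List.Forall₂.nil, List.Perm.nil⟩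
  | cons x p ih =>
    intro h
    cases h with
    | cons hxy h =>
      obtain ⟨l₄, h₁, h₂⟩ := ih h
      exact ⟨_ :: l₄, List.Forall₂.cons hxy h₁, h₂.cons _⟩
  | swap x y l =>
    intro h
    cases h with
    | cons h1 h =>
      cases h with
      | cons h2 h =>
        exact ⟨_ :: _ :: _, List.Forall₂.cons h2 (List.Forall₂.cons h1 h),
          List.Perm.swap _ _ _⟩
  | trans p q ih1 ih2 =>
    intro h
    obtain ⟨m₂, hm₂, pm₂⟩ := ih2 h
    obtain ⟨m₁, hm₁, pm₁⟩ := ih1 hm₂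
    exact ⟨m₁, hm₁, pm₁.trans pm₂⟩

def erEq (X Y : Fm) : Prop := X.er = Y.er

theorem erEq_shift {X Y : Fm} (h : erEq X Y) : erEq X.shift Y.shift := by
  unfold erEq at *
  rw [Fm.er_shift, Fm.er_shift, h]

theorem forall₂_shift {Γ Γ' : List Fm} (h : List.Forall₂ erEq Γ Γ') :
    List.Forall₂ erEq (Γ.map Fm.shift) (Γ'.map Fm.shift) :=
  List.forall₂_map_right_iff.mpr (List.forall₂_map_left_iff.mpr
    (h.imp fun {a b} hx => erEq_shift hx))

end Transport
section Big

theorem erEq_inst {X Y : Fm} (t : Tm) (h : erEq X Y) : erEq (X.inst t) (Y.inst t) := by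
  unfold erEq at *
  rw [Fm.er_inst, Fm.er_inst, h]

theorem Fm.negE_cases (B : Fm) :
    (∃ Z, B.er = Fm.neg Z ∧ B.er.negE = Z ∧ Z.negE = Fm.neg Z) ∨
      (B.er.negE = Fm.neg B.er) := by
  have hred := Fm.red_er B
  cases hE : B.er with
  | neg Z =>
    left
    refine ⟨Z, rfl, rfl, ?_⟩
    rw [hE] at hred
    exact Fm.negE_of_not_neg (Fm.red_neg hred)
  | _ => right; rfl

/-- The main replacement lemma: classical provability only depends on
formulas up to erasure of double negations. -/
theorem Cl.repl {Γ Δ : List Fm} (h : Cl Γ Δ) :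
    ∀ {Γ' Δ' : List Fm}, List.Forall₂ erEq Γ Γ' → List.Forall₂ erEq Δ Δ' → Cl Γ' Δ' := by
  induction h with
  | ax B =>
    intro Γ' Δ' hG hD
    rcases hG with _ | ⟨hBX, hnil⟩; rcases hnil; rcases hD with _ | ⟨hBY, hnil⟩; rcases hnil
    exact Cl.dn_ax _ _ (hBX.symm.trans hBY)
  | perm pG pD d ih =>
    intro Γ' Δ' hG hD
    obtain ⟨Γ₄, hG₄, pG₄⟩ := perm_forall₂ pG hG
    obtain ⟨Δ₄, hD₄, pD₄⟩ := perm_forall₂ pD hD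
    exact Cl.perm pG₄ pD₄ (ih hG₄ hD₄)
  | contrL d ih =>
    intro Γ' Δ' hG hD
    rcases hG with _ | ⟨hAX, hG⟩
    exact Cl.contrL (ih (List.Forall₂.cons hAX (List.Forall₂.cons hAX hG)) hD)
  | contrR d ih =>
    intro Γ' Δ' hG hD
    rcases hD with _ | ⟨hAY, hD⟩
    exact Cl.contrR (ih hG (List.Forall₂.cons hAY (List.Forall₂.cons hAY hD)))
  | weakL d ih =>
    intro Γ' Δ' hG hD
    rcases hG with _ | ⟨hAX, hG⟩
    exact Cl.weakL (ih hG hD)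
  | weakR d ih =>
    intro Γ' Δ' hG hD
    rcases hD with _ | ⟨hAY, hD⟩
    exact Cl.weakR (ih hG hD)
  | topR =>
    intro Γ' Δ' hG hD
    rcases hD with _ | ⟨hAY, hD⟩
    rename_i Y Δ₀
    refine Cl.stripR Y ?_
    rw [Fm.er_red_top (Fm.red_strip Y) ((Fm.er_strip Y).trans hAY.symm)]
    exact Cl.topR
  | botL =>
    intro Γ' Δ' hG hD
    rcases hG with _ | ⟨hAX, hG⟩
    rename_i X Γ₀
    refine Cl.stripL X ?_
    rw [Fm.er_red_bot (Fm.red_strip X) ((Fm.er_strip X).trans hAX.symm)]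
    exact Cl.botL
  | @negL _G _D B d ih =>
    intro Γ' Δ' hG hD
    rcases hG with _ | ⟨hPX, hG⟩
    rename_i X Γ₀
    refine Cl.stripL X ?_
    have hYer : X.strip.er = B.er.negE := (Fm.er_strip X).trans hPX.symm
    rcases Fm.negE_cases B with ⟨Z, hBZ, hne, hZne⟩ | hne
    · -- B.er = neg Z ; X.strip.er = Z
      rw [hne] at hYer
      have hBY : erEq B (Fm.neg X.strip) := by
        show B.er = (X.strip).er.negE
        rw [hYer, hZne, hBZ]
      have h1 : Cl Γ₀ (Fm.neg X.strip :: Δ') := ih hG (List.Forall₂.cons hBY hD)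
      have h2 := Cl.negR_inv h1 X.strip
      rw [remN_cons_self] at h2
      exact Cl.subR (List.filter_sublist (l := Δ')) h2
    · rw [hne] at hYer
      obtain ⟨Y₁, hY, hY₁⟩ := Fm.er_red_neg (Fm.red_strip X) hYer
      rw [hY]
      exact Cl.negL (ih hG (List.Forall₂.cons (show erEq B Y₁ from hY₁.symm) hD))
  | @negR _G _D B d ih =>
    intro Γ' Δ' hG hD
    rcases hD with _ | ⟨hPY, hD⟩
    rename_i Y Δ₀
    refine Cl.stripR Y ?_
    have hYer : Y.strip.er = B.er.negE := (Fm.er_strip Y).trans hPY.symm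
    rcases Fm.negE_cases B with ⟨Z, hBZ, hne, hZne⟩ | hne
    · rw [hne] at hYer
      have hBY : erEq B (Fm.neg Y.strip) := by
        show B.er = (Y.strip).er.negE
        rw [hYer, hZne, hBZ]
      have h1 : Cl (Fm.neg Y.strip :: Γ') Δ₀ := ih (List.Forall₂.cons hBY hG) hD
      have h2 := Cl.negL_inv h1 Y.strip
      rw [remN_cons_self] at h2
      exact Cl.subL (List.filter_sublist (l := Γ')) h2
    · rw [hne] at hYer
      obtain ⟨Y₁, hY, hY₁⟩ := Fm.er_red_neg (Fm.red_strip Y) hYer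
      rw [hY]
      exact Cl.negR (ih (List.Forall₂.cons (show erEq B Y₁ from hY₁.symm) hG) hD)
  | andL d ih =>
    intro Γ' Δ' hG hD
    rcases hG with _ | ⟨hPX, hG⟩
    rename_i X Γ₀
    refine Cl.stripL X ?_
    obtain ⟨Y₁, Y₂, hY, h₁, h₂⟩ := Fm.er_red_and (Fm.red_strip X)
      ((Fm.er_strip X).trans hPX.symm)
    rw [hY]
    exact Cl.andL (ih (List.Forall₂.cons h₁.symm (List.Forall₂.cons h₂.symm hG)) hD)
  | andR d1 d2 ih1 ih2 =>
    intro Γ' Δ' hG hD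
    rcases hD with _ | ⟨hPY, hD⟩
    rename_i Y Δ₀
    refine Cl.stripR Y ?_
    obtain ⟨Y₁, Y₂, hY, h₁, h₂⟩ := Fm.er_red_and (Fm.red_strip Y)
      ((Fm.er_strip Y).trans hPY.symm)
    rw [hY]
    exact Cl.andR (ih1 hG (List.Forall₂.cons h₁.symm hD))
      (ih2 hG (List.Forall₂.cons h₂.symm hD))
  | orL d1 d2 ih1 ih2 =>
    intro Γ' Δ' hG hD
    rcases hG with _ | ⟨hPX, hG⟩
    rename_i X Γ₀
    refine Cl.stripL X ?_
    obtain ⟨Y₁, Y₂, hY, h₁, h₂⟩ := Fm.er_red_or (Fm.red_strip X)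
      ((Fm.er_strip X).trans hPX.symm)
    rw [hY]
    exact Cl.orL (ih1 (List.Forall₂.cons h₁.symm hG) hD)
      (ih2 (List.Forall₂.cons h₂.symm hG) hD)
  | orR1 d ih =>
    intro Γ' Δ' hG hD
    rcases hD with _ | ⟨hPY, hD⟩
    rename_i Y Δ₀
    refine Cl.stripR Y ?_
    obtain ⟨Y₁, Y₂, hY, h₁, h₂⟩ := Fm.er_red_or (Fm.red_strip Y)
      ((Fm.er_strip Y).trans hPY.symm)
    rw [hY]
    exact Cl.orR1 (ih hG (List.Forall₂.cons h₁.symm hD))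
  | orR2 d ih =>
    intro Γ' Δ' hG hD
    rcases hD with _ | ⟨hPY, hD⟩
    rename_i Y Δ₀
    refine Cl.stripR Y ?_
    obtain ⟨Y₁, Y₂, hY, h₁, h₂⟩ := Fm.er_red_or (Fm.red_strip Y)
      ((Fm.er_strip Y).trans hPY.symm)
    rw [hY]
    exact Cl.orR2 (ih hG (List.Forall₂.cons h₂.symm hD))
  | impL d1 d2 ih1 ih2 =>
    intro Γ' Δ' hG hD
    rcases hG with _ | ⟨hPX, hG⟩
    rename_i X Γ₀
    refine Cl.stripL X ?_
    obtain ⟨Y₁, Y₂, hY, h₁, h₂⟩ := Fm.er_red_imp (Fm.red_strip X)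
      ((Fm.er_strip X).trans hPX.symm)
    rw [hY]
    exact Cl.impL (ih1 hG (List.Forall₂.cons h₁.symm hD))
      (ih2 (List.Forall₂.cons h₂.symm hG) hD)
  | impR d ih =>
    intro Γ' Δ' hG hD
    rcases hD with _ | ⟨hPY, hD⟩
    rename_i Y Δ₀
    refine Cl.stripR Y ?_
    obtain ⟨Y₁, Y₂, hY, h₁, h₂⟩ := Fm.er_red_imp (Fm.red_strip Y)
      ((Fm.er_strip Y).trans hPY.symm)
    rw [hY]
    exact Cl.impR (ih (List.Forall₂.cons h₁.symm hG) (List.Forall₂.cons h₂.symm hD))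
  | allL t d ih =>
    intro Γ' Δ' hG hD
    rcases hG with _ | ⟨hPX, hG⟩
    rename_i X Γ₀
    refine Cl.stripL X ?_
    obtain ⟨Y₁, hY, h₁⟩ := Fm.er_red_all (Fm.red_strip X)
      ((Fm.er_strip X).trans hPX.symm)
    rw [hY]
    exact Cl.allL t (ih (List.Forall₂.cons (erEq_inst t h₁.symm) hG) hD)
  | allR d ih =>
    intro Γ' Δ' hG hD
    rcases hD with _ | ⟨hPY, hD⟩
    rename_i Y Δ₀
    refine Cl.stripR Y ?_
    obtain ⟨Y₁, hY, h₁⟩ := Fm.er_red_all (Fm.red_strip Y)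
      ((Fm.er_strip Y).trans hPY.symm)
    rw [hY]
    exact Cl.allR (ih (forall₂_shift hG) (List.Forall₂.cons h₁.symm (forall₂_shift hD)))
  | exL d ih =>
    intro Γ' Δ' hG hD
    rcases hG with _ | ⟨hPX, hG⟩
    rename_i X Γ₀
    refine Cl.stripL X ?_
    obtain ⟨Y₁, hY, h₁⟩ := Fm.er_red_ex (Fm.red_strip X)
      ((Fm.er_strip X).trans hPX.symm)
    rw [hY]
    exact Cl.exL (ih (List.Forall₂.cons h₁.symm (forall₂_shift hG)) (forall₂_shift hD))
  | exR t d ih =>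
    intro Γ' Δ' hG hD
    rcases hD with _ | ⟨hPY, hD⟩
    rename_i Y Δ₀
    refine Cl.stripR Y ?_
    obtain ⟨Y₁, hY, h₁⟩ := Fm.er_red_ex (Fm.red_strip Y)
      ((Fm.er_strip Y).trans hPY.symm)
    rw [hY]
    exact Cl.exR t (ih hG (List.Forall₂.cons (erEq_inst t h₁.symm) hD))

end Big
section Embed

def toL : Option Fm → List Fm
  | none => []
  | some A => [A]

theorem toL_map_shift (Δ : Option Fm) : toL (Δ.map Fm.shift) = (toL Δ).map Fm.shift := by
  cases Δ <;> rfl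

theorem Intu.toCl {Γ : List Fm} {Δ : Option Fm} (h : Intu Γ Δ) : Cl Γ (toL Δ) := by
  induction h with
  | ax A => exact Cl.ax A
  | perm p d ih => exact Cl.permL ih p
  | contrL d ih => exact Cl.contrL ih
  | weakL d ih => exact Cl.weakL ih
  | weakR d ih => exact Cl.weakR ih
  | topR => exact Cl.topR
  | botL => exact Cl.botL
  | negL d ih => exact Cl.negL ih
  | negR d ih => exact Cl.negR ih
  | andL d ih => exact Cl.andL ih
  | andR d1 d2 ih1 ih2 => exact Cl.andR ih1 ih2
  | orL d1 d2 ih1 ih2 => exact Cl.orL ih1 ih2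
  | orR1 d ih => exact Cl.orR1 ih
  | orR2 d ih => exact Cl.orR2 ih
  | impL d1 d2 ih1 ih2 =>
    exact Cl.impL (Cl.subR (List.cons_sublist_cons.mpr (List.nil_sublist _)) ih1) ih2
  | impR d ih => exact Cl.impR ih
  | allL t d ih => exact Cl.allL t ih
  | allR d ih => exact Cl.allR ih
  | exL d ih => exact Cl.exL (by rwa [toL_map_shift] at ih)
  | exR t d ih => exact Cl.exR t ih

end Embed

theorem stmt6 (A : Fm) (h : Intu [] (some A.bar)) : Cl [] [A] := by
  have h1 : Cl [] [A.bar] := h.toCl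
  exact Cl.repl h1 List.Forall₂.nil
    (List.Forall₂.cons (show erEq A.bar A from Fm.er_bar A) List.Forall₂.nil)
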